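/- Let X be a real Banach space, U a strongly continuous one-parameter group of linear isometries of X, 0 ≤ s < T, M ≥ 0, B : [s,T] → L(X) continuous with ‖B(t)‖ ≤ M, and let S_B denote the associated evolution operator. Then S_B(t,t) = id for all t ∈ [s,T], and the cocycle (evolution) property S_B(t,r) ∘ S_B(r,s') = S_B(t,s') holds whenever s ≤ s' ≤ r ≤ t ≤ T. -/

import Mathlib

open MeasureTheory Set

lemma aux_contU {X : Type*} [NormedAddCommGroup X] [NormedSpace ℝ X]
    (U : ℝ → X →L[ℝ] X)
    (hUiso : ∀ (t : ℝ) (x : X), ‖U t x‖ = ‖x‖)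
    (hUcont : ∀ x : X, Continuous fun t : ℝ => U t x) :
    Continuous fun p : ℝ × X => U p.1 p.2 := by
  refine continuous_iff_continuousAt.2 fun p => ?_
  obtain ⟨a, x⟩ := p
  rw [Metric.continuousAt_iff]
  intro ε hε
  obtain ⟨δ₁, hδ₁, h₁⟩ := Metric.continuousAt_iff.1 ((hUcont x).continuousAt (x := a)) (ε / 2)
    (by linarith)
  refine ⟨min δ₁ (ε / 2), by positivity, ?_⟩
  rintro ⟨b, y⟩ hby
  rw [Prod.dist_eq] at hby
  simp only [lt_min_iff, max_lt_iff] at hby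
  have h2 : dist (U b y) (U b x) = dist y x := by
    rw [dist_eq_norm, dist_eq_norm, ← map_sub, hUiso]
  calc dist (U b y) (U a x) ≤ dist (U b y) (U b x) + dist (U b x) (U a x) := dist_triangle _ _ _
  _ < ε / 2 + ε / 2 := by
      refine add_lt_add (by rw [h2]; exact hby.2.2) (h₁ hby.1.1)
  _ = ε := by ring

lemma aux_unique {X : Type*} [NormedAddCommGroup X] [NormedSpace ℝ X] [CompleteSpace X]
    (U : ℝ → X →L[ℝ] X)
    (hUiso : ∀ (t : ℝ) (x : X), ‖U t x‖ = ‖x‖)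
    (hUcont : ∀ x : X, Continuous fun t : ℝ => U t x)
    (r T M : ℝ) (hrT : r ≤ T) (hM : 0 ≤ M)
    (B : ℝ → X →L[ℝ] X) (hBcont : ContinuousOn B (Icc r T))
    (hBbound : ∀ t ∈ Icc r T, ‖B t‖ ≤ M)
    (v w : ℝ → X) (hv : ContinuousOn v (Icc r T)) (hw : ContinuousOn w (Icc r T))
    (hvw : v r = w r)
    (hveq : ∀ t ∈ Icc r T, v t = U (t - r) (v r) + ∫ τ in r..t, U (t - τ) (B τ (v τ)))
    (hweq : ∀ t ∈ Icc r T, w t = U (t - r) (w r) + ∫ τ in r..t, U (t - τ) (B τ (w τ))) :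
    ∀ t ∈ Icc r T, v t = w t := by
  have key : ∀ u : ℝ → X, ContinuousOn u (Icc r T) → ∀ t : ℝ,
      ContinuousOn (fun τ => U (t - τ) (B τ (u τ))) (Icc r T) := fun u hu t =>
    (aux_contU U hUiso hUcont).comp_continuousOn
      (ContinuousOn.prodMk (continuousOn_const.sub continuousOn_id) (hBcont.clm_apply hu))
  have integ : ∀ u : ℝ → X, ContinuousOn u (Icc r T) → ∀ t ∈ Icc r T,
      IntervalIntegrable (fun τ => U (t - τ) (B τ (u τ))) volume r t := by
    intro u hu t ht
    refine ContinuousOn.intervalIntegrable ?_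
    rw [uIcc_of_le ht.1]
    exact (key u hu t).mono (Icc_subset_Icc le_rfl ht.2)
  set d : ℝ → ℝ := fun τ => ‖v τ - w τ‖ with hd_def
  have hd : ContinuousOn d (Icc r T) := (hv.sub hw).norm
  have hdiff : ∀ t ∈ Icc r T, v t - w t = ∫ τ in r..t, U (t - τ) (B τ (v τ - w τ)) := by
    intro t ht
    rw [hveq t ht, hweq t ht, hvw]
    rw [add_sub_add_left_eq_sub, ← intervalIntegral.integral_sub (integ v hv t ht) (integ w hw t ht)]
    congr 1
    ext τ
    rw [← map_sub, ← map_sub]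
  have hbound : ∀ t ∈ Icc r T, d t ≤ M * ∫ τ in r..t, d τ := by
    intro t ht
    have h1 : d t ≤ ∫ τ in r..t, ‖U (t - τ) (B τ (v τ - w τ))‖ := by
      rw [hd_def]; simp only [hdiff t ht]
      exact intervalIntegral.norm_integral_le_integral_norm ht.1
    have h2 : (∫ τ in r..t, ‖U (t - τ) (B τ (v τ - w τ))‖) ≤ ∫ τ in r..t, M * d τ := by
      refine intervalIntegral.integral_mono_on ht.1 ?_ ?_ ?_
      · refine ContinuousOn.intervalIntegrable ?_
        rw [uIcc_of_le ht.1]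
        exact ((key (fun τ => v τ - w τ) (hv.sub hw) t).mono
          (Icc_subset_Icc le_rfl ht.2)).norm
      · refine ContinuousOn.intervalIntegrable ?_
        rw [uIcc_of_le ht.1]
        exact (continuousOn_const.mul (hd.mono (Icc_subset_Icc le_rfl ht.2)))
      · intro τ hτ
        have hτT : τ ∈ Icc r T := ⟨hτ.1, hτ.2.trans ht.2⟩
        rw [hUiso]
        calc ‖B τ (v τ - w τ)‖ ≤ ‖B τ‖ * ‖v τ - w τ‖ := (B τ).le_opNorm _
        _ ≤ M * d τ := by
            exact mul_le_mul_of_nonneg_right (hBbound τ hτT) (norm_nonneg _)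
    calc d t ≤ ∫ τ in r..t, ‖U (t - τ) (B τ (v τ - w τ))‖ := h1
    _ ≤ ∫ τ in r..t, M * d τ := h2
    _ = M * ∫ τ in r..t, d τ := by rw [intervalIntegral.integral_const_mul]
  -- global continuous extension of d
  set D : ℝ → ℝ := fun τ => d ((projIcc r T hrT τ : ℝ)) with hD_def
  have hDcont : Continuous D :=
    hd.comp_continuous (continuous_subtype_val.comp (continuous_projIcc))
      (fun τ => (projIcc r T hrT τ).2)
  have hDeq : ∀ τ ∈ Icc r T, D τ = d τ := by
    intro τ hτ
    rw [hD_def]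
    simp [projIcc_of_mem hrT hτ]
  have hDnn : ∀ τ, 0 ≤ D τ := fun τ => norm_nonneg _
  set g : ℝ → ℝ := fun t => ∫ τ in r..t, D τ with hg_def
  have hg' : ∀ t : ℝ, HasDerivAt g (D t) t := fun t =>
    intervalIntegral.integral_hasDerivAt_right (hDcont.intervalIntegrable _ _)
      (hDcont.stronglyMeasurable.stronglyMeasurableAtFilter) hDcont.continuousAt
  have hgcont : Continuous g := by
    refine continuous_iff_continuousAt.2 fun t => (hg' t).continuousAt
  have hgeq : ∀ t ∈ Icc r T, g t = ∫ τ in r..t, d τ := by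
    intro t ht
    refine intervalIntegral.integral_congr ?_
    intro τ hτ
    rw [uIcc_of_le ht.1] at hτ
    exact hDeq τ ⟨hτ.1, hτ.2.trans ht.2⟩
  have hgnn : ∀ t ∈ Icc r T, 0 ≤ g t := fun t ht =>
    intervalIntegral.integral_nonneg ht.1 fun τ _ => hDnn τ
  have hmain := norm_le_gronwallBound_of_norm_deriv_right_le (f := g) (f' := D)
    (δ := 0) (K := M) (ε := 0) (a := r) (b := T) hgcont.continuousOn
    (fun t _ => (hg' t).hasDerivWithinAt)
    (by simp [hg_def])
    (by
      intro t ht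
      have htT : t ∈ Icc r T := ⟨ht.1, le_of_lt ht.2⟩
      rw [Real.norm_of_nonneg (hDnn t), Real.norm_of_nonneg (hgnn t htT), add_zero,
        hDeq t htT, hgeq t htT]
      exact hbound t htT)
  intro t ht
  have h0 : g t = 0 := by
    have := hmain t ht
    rw [gronwallBound_ε0_δ0, Real.norm_of_nonneg (hgnn t ht)] at this
    linarith [hgnn t ht]
  have hdt : d t ≤ 0 := by
    have := hbound t ht
    rw [← hgeq t ht, h0] at this
    linarith
  have : v t - w t = 0 := by
    rw [← norm_le_zero_iff]
    exact hdt
  exact sub_eq_zero.1 this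

/-- the evolution operator is the identity at equal times and
satisfies the cocycle (evolution) property. -/
theorem stmt_4
    {X : Type*} [NormedAddCommGroup X] [NormedSpace ℝ X] [CompleteSpace X]
    (U : ℝ → X →L[ℝ] X)
    (hU0 : U 0 = ContinuousLinearMap.id ℝ X)
    (hUadd : ∀ a b : ℝ, U (a + b) = (U a).comp (U b))
    (hUiso : ∀ (t : ℝ) (x : X), ‖U t x‖ = ‖x‖)
    (hUcont : ∀ x : X, Continuous fun t : ℝ => U t x)
    (s T M : ℝ) (hs : 0 ≤ s) (hsT : s < T) (hM : 0 ≤ M)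
    (B : ℝ → X →L[ℝ] X)
    (hBcont : ContinuousOn B (Icc s T))
    (hBbound : ∀ t ∈ Icc s T, ‖B t‖ ≤ M)
    -- the evolution operator `S_B`, characterized by its Duhamel formula
    (S : ℝ → ℝ → X →L[ℝ] X)
    (hScont : ∀ s' ∈ Icc s T, ∀ x : X, ContinuousOn (fun t => S t s' x) (Icc s' T))
    (hSeq : ∀ s' ∈ Icc s T, ∀ x : X, ∀ t ∈ Icc s' T,
      S t s' x = U (t - s') x + ∫ τ in s'..t, U (t - τ) (B τ (S τ s' x))) :
    (∀ t ∈ Icc s T, S t t = ContinuousLinearMap.id ℝ X) ∧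
    (∀ s' r t : ℝ, s ≤ s' → s' ≤ r → r ≤ t → t ≤ T →
      (S t r).comp (S r s') = S t s') := by
  have hid : ∀ t ∈ Icc s T, S t t = ContinuousLinearMap.id ℝ X := by
    intro t ht
    ext x
    have := hSeq t ht x t ⟨le_rfl, ht.2⟩
    simpa [hU0, intervalIntegral.integral_same] using this
  refine ⟨hid, ?_⟩
  intro s' r t hss' hs'r hrt htT
  have hs'T : s' ∈ Icc s T := ⟨hss', (hs'r.trans hrt).trans htT⟩
  have hrT : r ∈ Icc s T := ⟨hss'.trans hs'r, hrt.trans htT⟩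
  ext x
  set y := S r s' x with hy_def
  -- continuity and integrability of the integrand for the `s'`-based equation
  have cont1 : ∀ u : ℝ, ContinuousOn (fun τ => U (u - τ) (B τ (S τ s' x))) (Icc s' T) :=
    fun u => (aux_contU U hUiso hUcont).comp_continuousOn
      ((continuousOn_const.sub continuousOn_id).prodMk
        ((hBcont.mono (Icc_subset_Icc hs'T.1 le_rfl)).clm_apply (hScont s' hs'T x)))
  have int1 : ∀ u a b : ℝ, s' ≤ a → a ≤ b → b ≤ T →
      IntervalIntegrable (fun τ => U (u - τ) (B τ (S τ s' x))) volume a b := by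
    intro u a b ha hab hb
    refine ContinuousOn.intervalIntegrable ?_
    rw [uIcc_of_le hab]
    exact (cont1 u).mono (Icc_subset_Icc ha hb)
  -- the `s'`-based solution also solves the `r`-based equation
  have hweq : ∀ u ∈ Icc r T, S u s' x
      = U (u - r) (S r s' x) + ∫ τ in r..u, U (u - τ) (B τ (S τ s' x)) := by
    intro u hu
    have hs'u : s' ≤ u := hs'r.trans hu.1
    have e1 := hSeq s' hs'T x u ⟨hs'u, hu.2⟩
    have e2 := hSeq s' hs'T x r ⟨hs'r, hrT.2⟩
    have hsplit : (∫ τ in s'..r, U (u - τ) (B τ (S τ s' x)))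
        + ∫ τ in r..u, U (u - τ) (B τ (S τ s' x))
        = ∫ τ in s'..u, U (u - τ) (B τ (S τ s' x)) :=
      intervalIntegral.integral_add_adjacent_intervals
        (int1 u s' r le_rfl hs'r hrT.2) (int1 u r u hs'r hu.1 hu.2)
    have hcomm : U (u - r) (∫ τ in s'..r, U (r - τ) (B τ (S τ s' x)))
        = ∫ τ in s'..r, U (u - τ) (B τ (S τ s' x)) := by
      rw [← ContinuousLinearMap.intervalIntegral_comp_comm _ (int1 r s' r le_rfl hs'r hrT.2)]
      refine intervalIntegral.integral_congr fun τ hτ => ?_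
      have h := hUadd (u - r) (r - τ)
      rw [show u - r + (r - τ) = u - τ by ring] at h
      rw [h]; rfl
    have hgroup : U (u - s') x = U (u - r) (U (r - s') x) := by
      have h := hUadd (u - r) (r - s')
      rw [show u - r + (r - s') = u - s' by ring] at h
      rw [h]; rfl
    rw [e1, e2, map_add, hcomm, ← hgroup, ← hsplit, add_assoc]
  have hveq : ∀ u ∈ Icc r T, S u r y
      = U (u - r) (S r r y) + ∫ τ in r..u, U (u - τ) (B τ (S τ r y)) := by
    intro u hu
    rw [show S r r y = y by rw [hid r hrT]; rfl]
    exact hSeq r hrT y u hu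
  have hry : S r r y = S r s' x := by rw [hid r hrT]; rfl
  have huniq := aux_unique U hUiso hUcont r T M (hrt.trans htT) hM B
    (hBcont.mono (Icc_subset_Icc hrT.1 le_rfl))
    (fun τ hτ => hBbound τ ⟨hrT.1.trans hτ.1, hτ.2⟩)
    (fun u => S u r y) (fun u => S u s' x)
    (hScont r hrT y) ((hScont s' hs'T x).mono (Icc_subset_Icc hs'r le_rfl))
    hry hveq hweq
  simpa using huniq t ⟨hrt, htT⟩
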